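/- Let E be a real inner product space, let P be a finite subset of E, and let a ∈ P with a ≠ 0. Let s : E → E be the reflection s(x) = x − (2⟪x,a⟫/⟪a,a⟫) • a, and assume s '' (P \ {a}) = P \ {a}. Let c : E → ℝ be any function that is constant on norm levels, i.e. c(β) = c(β') whenever ‖β‖ = ‖β'‖. Then ⟪a, Σ_{β ∈ P} c(β) • β⟫ = c(a) · ⟪a,a⟫. -/

import Mathlib

/-- Corollary to the Lemma on `ρ(d)`: if the reflection `s` in the hyperplane orthogonal
to `a ∈ P` permutes `P \ {a}`, and `c : E → ℝ` depends only on the norm, then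
`⟪a, ∑_{β ∈ P} c β • β⟫ = c a * ⟪a,a⟫`. -/
theorem stmt_1 {E : Type*} [NormedAddCommGroup E] [InnerProductSpace ℝ E]
    (P : Finset E) (a : E) (haP : a ∈ P) (ha : a ≠ 0)
    (s : E → E)
    (hs : ∀ x : E, s x = x - ((2 * (inner ℝ x a : ℝ) / (inner ℝ a a : ℝ)) • a))
    (hperm : s '' ((P : Set E) \ {a}) = (P : Set E) \ {a})
    (c : E → ℝ) (hc : ∀ β β' : E, ‖β‖ = ‖β'‖ → c β = c β') :
    (inner ℝ a (∑ β ∈ P, c β • β) : ℝ) = c a * (inner ℝ a a : ℝ) := by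
  classical
  have haa : (inner ℝ a a : ℝ) ≠ 0 := by
    rw [real_inner_self_eq_norm_sq]
    exact pow_ne_zero 2 (norm_ne_zero_iff.mpr ha)
  have hinner : ∀ x : E, (inner ℝ a (s x) : ℝ) = - (inner ℝ a x : ℝ) := by
    intro x
    rw [hs, inner_sub_right, real_inner_smul_right, real_inner_comm x a]
    field_simp
    ring
  have hnorm : ∀ x : E, ‖s x‖ = ‖x‖ := by
    intro x
    have h2 : ‖s x‖ ^ 2 = ‖x‖ ^ 2 := by
      rw [hs]
      rw [norm_sub_sq_real, real_inner_smul_right, norm_smul, mul_pow, Real.norm_eq_abs, sq_abs]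
      have hna : (inner ℝ a a : ℝ) = ‖a‖ ^ 2 := real_inner_self_eq_norm_sq a
      have hne : ‖a‖ ≠ 0 := norm_ne_zero_iff.mpr ha
      rw [hna]
      field_simp
      ring
    nlinarith [norm_nonneg (s x), norm_nonneg x]
  have hcs : ∀ x : E, c (s x) = c x := fun x => hc _ _ (hnorm x)
  have hmem : ∀ x ∈ P.erase a, s x ∈ P.erase a := by
    intro x hx
    have hx' : x ∈ (P : Set E) \ {a} := by
      simp only [Finset.mem_erase] at hx
      exact ⟨hx.2, hx.1⟩
    have : s x ∈ (P : Set E) \ {a} := hperm ▸ Set.mem_image_of_mem s hx'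
    simp only [Set.mem_diff, Set.mem_singleton_iff, Finset.mem_coe] at this
    exact Finset.mem_erase.mpr ⟨this.2, this.1⟩
  have hss : ∀ x : E, s (s x) = x := by
    intro x
    have h1 : (inner ℝ (s x) a : ℝ) = - (inner ℝ x a : ℝ) := by
      calc (inner ℝ (s x) a : ℝ) = inner ℝ a (s x) := real_inner_comm _ _
        _ = - inner ℝ a x := hinner x
        _ = - inner ℝ x a := by rw [real_inner_comm a x]
    rw [hs (s x), h1, hs x]
    have h2 : (2 * -(inner ℝ x a : ℝ) / (inner ℝ a a : ℝ))
        = -(2 * (inner ℝ x a : ℝ) / (inner ℝ a a : ℝ)) := by ring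
    rw [h2, neg_smul]
    abel
  have hre : ∑ β ∈ P.erase a, c β * (inner ℝ a β : ℝ)
      = ∑ β ∈ P.erase a, c (s β) * (inner ℝ a (s β) : ℝ) := by
    refine Finset.sum_nbij' s s hmem hmem (fun x _ => hss x) (fun x _ => hss x) ?_
    intro x hx
    rw [hss]
  have hneg : ∑ β ∈ P.erase a, c (s β) * (inner ℝ a (s β) : ℝ)
      = - ∑ β ∈ P.erase a, c β * (inner ℝ a β : ℝ) := by
    rw [← Finset.sum_neg_distrib]
    refine Finset.sum_congr rfl fun x hx => ?_
    rw [hcs, hinner]; ring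
  have key : ∑ β ∈ P.erase a, c β * (inner ℝ a β : ℝ) = 0 := by linarith
  rw [inner_sum]
  simp only [real_inner_smul_right]
  rw [← Finset.add_sum_erase P (fun i => c i * (inner ℝ a i : ℝ)) haP, key, add_zero]
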